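/- For each n ∈ ℕ, let x_n, p_n, rev_n : [0,∞) → ℝ denote the interim allocation, payment, and miner-revenue rules of a TFM with n participating users, and let T be a probability measure on [0,∞). Suppose for each n: (user IC) for all v, ṽ ≥ 0, v·x_n(v) − p_n(v) ≥ v·x_n(ṽ) − p_n(ṽ); (cartel IC) for all v, ṽ ≥ 0, v·x_n(v) − p_n(v) + rev_n(v) ≥ v·x_n(ṽ) − p_n(ṽ) + rev_n(ṽ); and the boundary conditions rev_n(0) ≥ ∫ rev_{n−1}(v) dT(v) (from strong collusion proofness: censoring a colluding zero-value user cannot raise the cartel's utility) and rev_n(0) ≤ ∫ rev_{n−1}(v) dT(v) (from on-chain miner simplicity: fabricating a zero bid cannot raise the miner's revenue), with each rev_n T-integrable. Then there is a single constant C with rev_n(v) = C for all n ∈ ℕ and all v ≥ 0: the miner's expected revenue is independent of the number of participating users, even after conditioning on the bid of any single user. -/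

import Mathlib

open MeasureTheory

/-- **On-chain simplicity and strong collusion proofness force constant
expected miner revenue, independent of the number of users.**
For each number `n` of participating users, let `x n`, `p n`, `rev n` be
the interim allocation, payment, and miner-revenue rules of the TFM, and
let `T` be the (probability) distribution of a user's value on `[0,∞)`.
Assume for each `n`: user incentive compatibility; cartel incentive
compatibility (from strong collusion proofness of a miner–user cartel);
integrability of `rev n`; and the boundary conditions
`rev (n+1) 0 ≥ ∫ rev n dT` (censoring a colluding zero-value user cannot
raise the cartel's utility) and `rev (n+1) 0 ≤ ∫ rev n dT` (fabricating a
zero bid cannot raise the miner's revenue).  Then there is a single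
constant `C` with `rev n v = C` for every `n` and every `v ≥ 0`. -/
theorem constant_revenue_across_population_sizes
    (T : Measure ℝ) [IsProbabilityMeasure T] (hT0 : T (Set.Iio 0) = 0)
    (x p rev : ℕ → ℝ → ℝ)
    (hIC : ∀ n : ℕ, ∀ v w : ℝ, 0 ≤ v → 0 ≤ w →
      v * x n v - p n v ≥ v * x n w - p n w)
    (hCartel : ∀ n : ℕ, ∀ v w : ℝ, 0 ≤ v → 0 ≤ w →
      v * x n v - p n v + rev n v ≥ v * x n w - p n w + rev n w)
    (hInt : ∀ n : ℕ, Integrable (rev n) T)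
    (hCensor : ∀ n : ℕ, rev (n + 1) 0 ≥ ∫ v, rev n v ∂T)
    (hFabricate : ∀ n : ℕ, rev (n + 1) 0 ≤ ∫ v, rev n v ∂T) :
    ∃ C : ℝ, ∀ n : ℕ, ∀ v : ℝ, 0 ≤ v → rev n v = C := by
  -- Step 1: basic Lipschitz-type bound from the two IC conditions.
  have key : ∀ n a b, 0 ≤ a → a ≤ b →
      |rev n b - rev n a| ≤ (b - a) * (x n b - x n a) := by
    intro n a b ha hab
    have hb : 0 ≤ b := ha.trans hab
    have h1 := hIC n b a hb ha
    have h2 := hIC n a b ha hb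
    have h3 := hCartel n b a hb ha
    have h4 := hCartel n a b ha hb
    rw [abs_le]
    constructor <;> nlinarith
  have mono : ∀ n a b, 0 ≤ a → a ≤ b → x n a ≤ x n b := by
    intro n a b ha hab
    have hb : 0 ≤ b := ha.trans hab
    rcases eq_or_lt_of_le hab with rfl | h
    · exact le_rfl
    · have h1 := hIC n b a hb ha
      have h2 := hIC n a b ha hb
      nlinarith
  -- Step 2: telescoping over an equal partition of [a,b] into N+1 pieces.
  have part : ∀ N : ℕ, ∀ n a b, 0 ≤ a → a ≤ b →
      |rev n b - rev n a| ≤ ((b - a) / (N + 1)) * (x n b - x n a) := by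
    intro N
    induction N with
    | zero =>
        intro n a b ha hab
        simpa using key n a b ha hab
    | succ N ih =>
        intro n a b ha hab
        have hN2 : (0:ℝ) < (N:ℝ) + 2 := by positivity
        set d : ℝ := (b - a) / ((N:ℝ) + 2) with hd
        have hd0 : 0 ≤ d := by
          apply div_nonneg (by linarith) (by linarith)
        set m : ℝ := b - d with hm
        have hma : m - a = ((N:ℝ) + 1) * d := by
          have : b - a = ((N:ℝ) + 2) * d := by
            rw [hd]; field_simp
          rw [hm]; linarith
        have ham : a ≤ m := by nlinarith
        have hmb : m ≤ b := by linarith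
        have h1 := key n m b (ha.trans ham) hmb
        have h2 := ih n a m ha ham
        have hbm : b - m = d := by rw [hm]; ring
        have hdm : (m - a) / ((N:ℝ) + 1) = d := by
          rw [hma]; field_simp
        have hx1 := mono n a m ha ham
        have hx2 := mono n m b (ha.trans ham) hmb
        calc |rev n b - rev n a|
            ≤ |rev n b - rev n m| + |rev n m - rev n a| := by
              have := abs_sub_abs_le_abs_sub (rev n b - rev n a) 0
              simpa using abs_sub_le (rev n b) (rev n m) (rev n a)
          _ ≤ d * (x n b - x n m) + d * (x n m - x n a) := by
              rw [hbm] at h1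
              rw [hdm] at h2
              exact add_le_add h1 h2
          _ = d * (x n b - x n a) := by ring
          _ = ((b - a) / ((N:ℝ) + 2)) * (x n b - x n a) := by rw [hd]
          _ = ((b - a) / ((N:ℕ).succ + 1)) * (x n b - x n a) := by
              push_cast; ring_nf
    -- end part
  -- Step 3: rev n is constant on [0,∞).
  have hconst : ∀ n v, 0 ≤ v → rev n v = rev n 0 := by
    intro n v hv
    by_contra hne
    have habs : 0 < |rev n v - rev n 0| := by
      rw [abs_pos]
      intro h'
      exact hne (by linarith)
    set c := |rev n v - rev n 0| with hc
    set K := v * (x n v - x n 0) with hK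
    have hK0 : 0 ≤ K := mul_nonneg hv (by linarith [mono n 0 v le_rfl hv])
    obtain ⟨N, hN⟩ := exists_nat_gt (K / c)
    have hbound := part N n 0 v le_rfl hv
    have hN1 : (0:ℝ) < (N:ℝ) + 1 := by positivity
    have hlt : K / c < (N:ℝ) + 1 := lt_of_lt_of_le hN (by linarith)
    have hKlt : K < ((N:ℝ) + 1) * c := by
      rw [div_lt_iff₀ habs] at hlt
      linarith
    have heq : ((v - 0) / ((N:ℝ) + 1)) * (x n v - x n 0) = K / ((N:ℝ) + 1) := by
      rw [hK]; field_simp; ring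
    rw [heq] at hbound
    have : c ≤ K / ((N:ℝ) + 1) := hbound
    have : c * ((N:ℝ) + 1) ≤ K := by
      rw [le_div_iff₀ hN1] at this
      linarith
    nlinarith
  -- Step 4: the integral of rev n over T equals rev n 0.
  have hint : ∀ n, ∫ v, rev n v ∂T = rev n 0 := by
    intro n
    have hae : rev n =ᵐ[T] fun _ => rev n 0 := by
      rw [Filter.EventuallyEq, ae_iff]
      refine measure_mono_null ?_ hT0
      intro z hz
      simp only [Set.mem_setOf_eq] at hz
      simp only [Set.mem_Iio]
      by_contra h
      push_neg at h
      exact hz (hconst n z h)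
    rw [integral_congr_ae hae]
    simp
  -- Step 5: rev n 0 is independent of n.
  have hstep : ∀ n, rev (n + 1) 0 = rev n 0 := by
    intro n
    have h1 := hCensor n
    have h2 := hFabricate n
    rw [hint n] at h1 h2
    linarith
  have hsame : ∀ n, rev n 0 = rev 0 0 := by
    intro n
    induction n with
    | zero => rfl
    | succ n ih => rw [hstep n, ih]
  exact ⟨rev 0 0, fun n v hv => by rw [hconst n v hv, hsame n]⟩
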